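/- Let S be a finite set, g : S × S → {0,1}, and p : S → ℝ with 0 ≤ p_s ≤ |S| − 1 for all s ∈ S, such that the Miller–Tucker–Zemlin inequalities −|S|·(1 − g(s̄,s)) ≤ p_s − p_{s̄} − 1 hold for all s, s̄ ∈ S. Then the directed graph on vertex set S with an edge from s̄ to s whenever g(s̄,s) = 1 contains no directed cycle. -/
import Mathlib


/-! ### Statement 14: the Miller–Tucker–Zemlin inequalities enforce acyclicity. -/

theorem mtz_acyclic {S : Type} [Fintype S] [DecidableEq S]
    (g : S → S → ℕ) (hg : ∀ s t : S, g s t ≤ 1)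
    (p : S → ℝ) (hp : ∀ s : S, 0 ≤ p s ∧ p s ≤ (Fintype.card S : ℝ) - 1)
    (hMTZ : ∀ s sb : S, -(Fintype.card S : ℝ) * (1 - (g sb s : ℝ)) ≤ p s - p sb - 1) :
    ¬ ∃ (c : List S) (h : c ≠ []),
        c.Chain' (fun a b => g a b = 1) ∧ g (c.getLast h) (c.head h) = 1 := by
  have step : ∀ a b : S, g a b = 1 → p a + 1 ≤ p b := by
    intro a b hab
    have := hMTZ b a
    rw [hab] at this
    simp at this
    linarith
  have aux : ∀ (l : List S) (a : S), List.Chain (fun x y => g x y = 1) a l →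
      p a ≤ p ((a :: l).getLast (by simp)) := by
    intro l
    induction l with
    | nil => intro a _; simp
    | cons b t ih =>
      intro a hc
      rcases List.chain_cons.mp hc with ⟨hab, hbt⟩
      have h1 := step a b hab
      have h2 := ih b hbt
      rw [List.getLast_cons (by simp)]
      linarith
  rintro ⟨c, hne, hchain, hcyc⟩
  obtain ⟨a, t, rfl⟩ := List.exists_cons_of_ne_nil hne
  have h1 : p a ≤ p ((a :: t).getLast hne) := aux t a hchain
  have h2 := step _ _ hcyc
  simp only [List.head_cons] at h2
  linarith
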